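/- For every Lebesgue-null set N ⊂ ℝ there exists a 1-Lipschitz function φ : ℝ → ℝ with |φ'(t)| = 1 at almost every t ∈ ℝ, such that φ is not differentiable at any point of N. -/

import Mathlib

open MeasureTheory
open Set Metric Filter Topology
open scoped ENNReal NNReal


lemma lemA (N U : Set ℝ) (hN : volume N = 0) (hUo : IsOpen U) (hNU : N ⊆ U)
    (hUc : Uᶜ.Nonempty) (ε : ℝ) (hε : 0 < ε) (hε1 : ε ≤ 1) :
    ∃ V : Set ℝ, IsOpen V ∧ N ⊆ V ∧ V ⊆ U ∧
      ∀ x ∈ N, ∃ h : ℝ, 0 < h ∧ h ≤ ε ∧ Ioo (x - h) (x + h) ⊆ U ∧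
        volume (V ∩ Ioo (x - h) (x + h)) ≤ ENNReal.ofReal (ε * h) := by
  classical
  set δ : ℝ → ℝ := fun x => infDist x Uᶜ with hδ
  have hδpos : ∀ x ∈ U, 0 < δ x := fun x hx =>
    (hUo.isClosed_compl.notMem_iff_infDist_pos hUc).mp (by simpa using hx)
  have hball : ∀ x, ball x (δ x) ⊆ U := by
    intro x y hy
    by_contra hyU
    have : infDist x Uᶜ ≤ dist x y := infDist_le_dist_of_mem hyU
    rw [mem_ball, dist_comm] at hy
    exact absurd this (not_le.mpr hy)
  -- level sets
  set Nk : ℕ → Set ℝ := fun k => {x ∈ N | (1/2 : ℝ)^k < δ x} with hNk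
  have hNkn : ∀ k, volume (Nk k) = 0 := fun k =>
    measure_mono_null (fun x hx => hx.1) hN
  -- open sets O k
  have hO : ∀ k : ℕ, ∃ O : Set ℝ, Nk k ⊆ O ∧ IsOpen O ∧
      volume O ≤ ENNReal.ofReal (ε^2 * (1/2)^(2*k+5)) := by
    intro k
    have hpos : (0:ℝ≥0∞) < ENNReal.ofReal (ε^2 * (1/2)^(2*k+5)) := by
      rw [ENNReal.ofReal_pos]; positivity
    obtain ⟨O, hO1, hO2, hO3⟩ := (Nk k).exists_isOpen_lt_of_lt _ (by rw [hNkn k]; exact hpos)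
    exact ⟨O, hO1, hO2, hO3.le⟩
  choose O hO1 hO2 hO3 using hO
  set W : ℕ → Set ℝ := fun k => O k ∩ thickening ((1/2)^(k+2)) (Nk k) ∩ U with hW
  refine ⟨⋃ k, W k, ?_, ?_, ?_, ?_⟩
  · exact isOpen_iUnion fun k => ((hO2 k).inter (isOpen_thickening)).inter hUo
  · intro x hx
    obtain ⟨k, hk⟩ : ∃ k : ℕ, (1/2:ℝ)^k < δ x := by
      obtain ⟨k, hk⟩ := exists_pow_lt_of_lt_one (hδpos x (hNU hx)) (by norm_num : (1/2:ℝ) < 1)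
      exact ⟨k, hk⟩
    have hxNk : x ∈ Nk k := ⟨hx, hk⟩
    exact mem_iUnion.mpr ⟨k, ⟨hO1 k hxNk, self_subset_thickening (by positivity) _ hxNk⟩, hNU hx⟩
  · exact iUnion_subset fun k => inter_subset_right
  · intro x hx
    have hex : ∃ k : ℕ, (1/2:ℝ)^k < δ x :=
      exists_pow_lt_of_lt_one (hδpos x (hNU hx)) (by norm_num)
    set k := Nat.find hex with hkdef
    have hk : (1/2:ℝ)^k < δ x := Nat.find_spec hex
    set h := min ((1/2:ℝ)^(k+2)) ε with hh
    have hhpos : 0 < h := lt_min (by positivity) hε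
    have hhk : h ≤ (1/2:ℝ)^(k+2) := min_le_left _ _
    have hhε : h ≥ ε * (1/2:ℝ)^(k+2) := by
      rcases min_cases ((1/2:ℝ)^(k+2)) ε with ⟨he, h2⟩ | ⟨he, h2⟩
      · rw [hh, he]; nlinarith [pow_pos (by norm_num : (0:ℝ) < 1/2) (k+2)]
      · rw [hh, he]
        nlinarith [pow_le_one₀ (by norm_num : (0:ℝ) ≤ 1/2) (by norm_num : (1/2:ℝ) ≤ 1) (n := k+2)]
    have hIU : Ioo (x-h) (x+h) ⊆ U := by
      intro y hy
      apply hball x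
      rw [mem_ball, Real.dist_eq]
      have h1 : |y - x| < h := abs_sub_lt_iff.mpr ⟨by linarith [hy.2], by linarith [hy.1]⟩
      have h2 : (1/2:ℝ)^(k+2) ≤ (1/2)^k :=
        pow_le_pow_of_le_one (by norm_num) (by norm_num) (by omega)
      linarith
    refine ⟨h, hhpos, min_le_right _ _, hIU, ?_⟩
    have key : ∀ k' : ℕ, volume (W k' ∩ Ioo (x-h) (x+h)) ≤
        ENNReal.ofReal (ε^2 * (1/2)^(k+4) * (1/2)^k') := by
      intro k'
      rcases le_or_gt (k'+2) k with hcase | hcase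
      · -- empty intersection
        have : W k' ∩ Ioo (x-h) (x+h) = ∅ := by
          rw [eq_empty_iff_forall_notMem]
          rintro y ⟨⟨⟨hyO, hyT⟩, hyU⟩, hyI⟩
          obtain ⟨z, hz, hdyz⟩ := mem_thickening_iff.mp hyT
          have hz2 : (1/2:ℝ)^k' < δ z := hz.2
          have h3 : δ z ≤ δ x + dist z x := infDist_le_infDist_add_dist
          have h4 : δ x ≤ (1/2:ℝ)^(k-1) := by
            have := Nat.find_min hex (m := k-1) (by omega)
            push_neg at this
            exact this
          have h5 : dist z x ≤ dist z y + dist y x := dist_triangle z y x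
          have h6 : dist z y < (1/2:ℝ)^(k'+2) := by rwa [dist_comm] at hdyz
          have h7 : dist y x < h := by
            rw [Real.dist_eq]
            exact abs_sub_lt_iff.mpr ⟨by linarith [hyI.2], by linarith [hyI.1]⟩
          have e1 : (1/2:ℝ)^(k-1) ≤ (1/2)^(k'+1) :=
            pow_le_pow_of_le_one (by norm_num) (by norm_num) (by omega)
          have e2 : (1/2:ℝ)^(k+2) ≤ (1/2)^(k'+4) :=
            pow_le_pow_of_le_one (by norm_num) (by norm_num) (by omega)
          have e3 : (1/2:ℝ)^(k'+1) = (1/2)^k' * (1/2) := pow_succ _ _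
          have e4 : (1/2:ℝ)^(k'+2) = (1/2)^k' * (1/4) := by rw [pow_add]; ring
          have e5 : (1/2:ℝ)^(k'+4) = (1/2)^k' * (1/16) := by rw [pow_add]; ring
          linarith
        rw [this]
        simp
      · -- measure bound
        have h1 : volume (W k' ∩ Ioo (x-h) (x+h)) ≤ volume (O k') :=
          measure_mono (fun y hy => hy.1.1.1)
        refine (h1.trans (hO3 k')).trans (ENNReal.ofReal_le_ofReal ?_)
        have : (1/2:ℝ)^(2*k'+5) ≤ (1/2)^(k+4) * (1/2)^k' := by
          rw [← pow_add]
          exact pow_le_pow_of_le_one (by norm_num) (by norm_num) (by omega)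
        nlinarith [sq_nonneg ε]
    calc volume ((⋃ k', W k') ∩ Ioo (x-h) (x+h))
        = volume (⋃ k', W k' ∩ Ioo (x-h) (x+h)) := by rw [iUnion_inter]
      _ ≤ ∑' k', volume (W k' ∩ Ioo (x-h) (x+h)) := measure_iUnion_le _
      _ ≤ ∑' k' : ℕ, ENNReal.ofReal (ε^2 * (1/2)^(k+4) * (1/2)^k') :=
          ENNReal.tsum_le_tsum key
      _ = ∑' k' : ℕ, ENNReal.ofReal (ε^2 * (1/2)^(k+4)) * (ENNReal.ofReal (1/2))^k' := by
          congr 1; funext k'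
          rw [← ENNReal.ofReal_pow (by norm_num), ← ENNReal.ofReal_mul (by positivity)]
      _ = ENNReal.ofReal (ε^2 * (1/2)^(k+4)) * (1 - ENNReal.ofReal (1/2))⁻¹ := by
          rw [ENNReal.tsum_mul_left, ENNReal.tsum_geometric]
      _ ≤ ENNReal.ofReal (ε * h) := by
          have : (1 - ENNReal.ofReal (1/2:ℝ))⁻¹ = (2:ℝ≥0∞) := by
            rw [show ENNReal.ofReal (1/2:ℝ) = 2⁻¹ by
              rw [one_div, ENNReal.ofReal_inv_of_pos (by norm_num)]; norm_num]
            rw [ENNReal.one_sub_inv_two]; simp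
          rw [this, show (2:ℝ≥0∞) = ENNReal.ofReal 2 by norm_num,
            ← ENNReal.ofReal_mul (by positivity)]
          apply ENNReal.ofReal_le_ofReal
          have e : (1/2:ℝ)^(k+4) * 2 = (1/2)^(k+3) := by rw [pow_succ]; ring
          have e2 : (1/2:ℝ)^(k+3) ≤ (1/2)^(k+2) :=
            pow_le_pow_of_le_one (by norm_num) (by norm_num) (by omega)
          nlinarith


lemma seqLem (N : Set ℝ) (hN : volume N = 0) :
    ∃ U : ℕ → Set ℝ, (∀ n, IsOpen (U n)) ∧ (∀ n, N ⊆ U n) ∧ (∀ n, U (n+1) ⊆ U n) ∧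
      ∀ n, ∀ x ∈ N, ∃ h : ℝ, 0 < h ∧ h ≤ (1/2:ℝ)^(n+1) ∧ Ioo (x-h) (x+h) ⊆ U n ∧
        volume (U (n+1) ∩ Ioo (x-h) (x+h)) ≤ ENNReal.ofReal ((1/2)^(n+1) * h) := by
  classical
  obtain ⟨U0, hU0N, hU0o, hU0v⟩ : ∃ O, N ⊆ O ∧ IsOpen O ∧ volume O < 1 :=
    Set.exists_isOpen_lt_of_lt N 1 (by rw [hN]; norm_num)
  have hU0c : U0ᶜ.Nonempty := by
    by_contra hc
    rw [Set.not_nonempty_iff_eq_empty, Set.compl_empty_iff] at hc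
    rw [hc, Real.volume_univ] at hU0v
    exact absurd hU0v (by simp)
  have hstep : ∀ (n : ℕ) (p : {U : Set ℝ // IsOpen U ∧ N ⊆ U ∧ Uᶜ.Nonempty}),
      ∃ V : Set ℝ, IsOpen V ∧ N ⊆ V ∧ V ⊆ p.1 ∧
      ∀ x ∈ N, ∃ h : ℝ, 0 < h ∧ h ≤ (1/2:ℝ)^(n+1) ∧ Ioo (x-h) (x+h) ⊆ p.1 ∧
        volume (V ∩ Ioo (x-h) (x+h)) ≤ ENNReal.ofReal ((1/2)^(n+1) * h) :=
    fun n p => lemA N p.1 hN p.2.1 p.2.2.1 p.2.2.2 _ (by positivity)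
      (pow_le_one₀ (by norm_num) (by norm_num))
  let step : (n : ℕ) → {U : Set ℝ // IsOpen U ∧ N ⊆ U ∧ Uᶜ.Nonempty} →
      {U : Set ℝ // IsOpen U ∧ N ⊆ U ∧ Uᶜ.Nonempty} := fun n p =>
    ⟨(hstep n p).choose, (hstep n p).choose_spec.1, (hstep n p).choose_spec.2.1,
      p.2.2.2.mono (compl_subset_compl.mpr (hstep n p).choose_spec.2.2.1)⟩
  let seq : ℕ → {U : Set ℝ // IsOpen U ∧ N ⊆ U ∧ Uᶜ.Nonempty} :=
    fun n => Nat.rec ⟨U0, hU0o, hU0N, hU0c⟩ step n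
  refine ⟨fun n => (seq n).1, fun n => (seq n).2.1, fun n => (seq n).2.2.1,
    fun n => ?_, fun n => ?_⟩
  · exact (hstep n (seq n)).choose_spec.2.2.1
  · exact (hstep n (seq n)).choose_spec.2.2.2


noncomputable def ff (E : Set ℝ) : ℝ → ℝ := fun t => 2 * E.indicator (fun _ => (1:ℝ)) t - 1

section helpers
variable {E : Set ℝ} (hE : MeasurableSet E)

lemma ff_mem {t : ℝ} (ht : t ∈ E) : ff E t = 1 := by simp [ff, indicator_of_mem ht]; norm_num
lemma ff_not_mem {t : ℝ} (ht : t ∉ E) : ff E t = -1 := by simp [ff, indicator_of_notMem ht]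

lemma fnorm (t : ℝ) : ‖ff E t‖ = 1 := by
  by_cases ht : t ∈ E
  · rw [ff_mem ht]; simp
  · rw [ff_not_mem ht]; simp

include hE

lemma fmeas : Measurable (ff E) :=
  ((measurable_const.mul (measurable_one.indicator hE))).sub measurable_const

lemma fint (a b : ℝ) : IntervalIntegrable (ff E) volume a b := by
  refine (intervalIntegrable_iff).mpr ?_
  refine Integrable.mono' (g := fun _ => (1:ℝ)) ?_ (fmeas hE).aestronglyMeasurable ?_
  · exact (integrableOn_const_iff).mpr (Or.inr measure_Ioc_lt_top)
  · exact Eventually.of_forall (fun t => le_of_eq (fnorm t))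

lemma integral_eq (a h : ℝ) (hh : 0 ≤ h) :
    ∫ t in a..(a+h), ff E t = 2 * (volume (E ∩ Ioc a (a+h))).toReal - h := by
  have hab : a ≤ a + h := by linarith
  rw [intervalIntegral.integral_of_le hab]
  have h1 : IntegrableOn (fun t => 2 * E.indicator (fun _ => (1:ℝ)) t) (Ioc a (a+h)) volume := by
    refine Integrable.mono' (g := fun _ => (2:ℝ)) ?_ ?_ ?_
    · exact (integrableOn_const_iff).mpr (Or.inr measure_Ioc_lt_top)
    · exact (measurable_const.mul ((measurable_one.indicator hE))).aestronglyMeasurable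
    · refine Eventually.of_forall (fun t => ?_)
      by_cases ht : t ∈ E <;> simp [ht, indicator_of_mem, indicator_of_notMem]
  have h2 : IntegrableOn (fun _ : ℝ => (1:ℝ)) (Ioc a (a+h)) volume :=
    (integrableOn_const_iff).mpr (Or.inr measure_Ioc_lt_top)
  rw [show ff E = fun t => 2 * E.indicator (fun _ => (1:ℝ)) t - 1 from rfl]
  rw [integral_sub h1 h2, integral_const_mul, setIntegral_indicator hE, setIntegral_const,
    setIntegral_const, measureReal_def, measureReal_def, Real.volume_Ioc, inter_comm]
  simp [ENNReal.toReal_ofReal hh]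
end helpers

section phi
variable {E : Set ℝ} (hE : MeasurableSet E)

noncomputable def phi (E : Set ℝ) : ℝ → ℝ := fun t => ∫ s in (0:ℝ)..t, ff E s

include hE

lemma phi_sub (x y : ℝ) : phi E y - phi E x = ∫ t in x..y, ff E t := by
  rw [phi, phi, ← intervalIntegral.integral_add_adjacent_intervals (fint hE 0 x) (fint hE x y)]
  ring

lemma phi_lip : LipschitzWith 1 (phi E) := by
  refine LipschitzWith.of_dist_le_mul fun a b => ?_
  rw [Real.dist_eq, Real.dist_eq, show phi E a - phi E b = ∫ t in b..a, ff E t from phi_sub hE b a]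
  calc |∫ t in b..a, ff E t| ≤ 1 * |a - b| :=
        intervalIntegral.norm_integral_le_of_norm_le_const
          (fun x _ => le_of_eq (fnorm x))
    _ = 1 * |a - b| := rfl

lemma phi_slope (x y : ℝ) (hxy : y ≠ x) :
    slope (phi E) x y = (∫ t in x..y, ff E t) / (y - x) := by
  rw [slope_def_field, phi_sub hE]

lemma phi_hasDerivAt_ae :
    ∀ᵐ x ∂(volume : Measure ℝ), HasDerivAt (phi E) (ff E x) x := by
  have hloc : LocallyIntegrable (ff E) volume := by
    intro x
    refine ⟨Ioo (x-1) (x+1), Ioo_mem_nhds (by linarith) (by linarith), ?_⟩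
    refine Integrable.mono' (g := fun _ => (1:ℝ)) ?_ (fmeas hE).aestronglyMeasurable ?_
    · exact (integrableOn_const_iff).mpr (Or.inr measure_Ioo_lt_top)
    · exact Eventually.of_forall (fun t => le_of_eq (fnorm t))
  filter_upwards [IsUnifLocDoublingMeasure.ae_tendsto_average_norm_sub volume hloc 1] with x hx
  have havg : Tendsto (fun y : ℝ => ⨍ z in closedBall x |y - x|, ‖ff E z - ff E x‖)
      (𝓝[≠] x) (𝓝 0) := by
    refine hx (fun _ => x) (fun y => |y - x|) ?_ ?_
    · refine tendsto_nhdsWithin_iff.mpr ⟨?_, ?_⟩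
      · have : Tendsto (fun y : ℝ => y - x) (𝓝[≠] x) (𝓝 0) :=
          ((continuous_id.sub continuous_const).tendsto' x 0 (by simp)).mono_left
            nhdsWithin_le_nhds
        simpa using this.abs
      · filter_upwards [self_mem_nhdsWithin] with y hy
        simpa [sub_eq_zero] using hy
    · filter_upwards with y
      simp [abs_nonneg]
  rw [hasDerivAt_iff_tendsto_slope]
  have hbound : ∀ᶠ y in 𝓝[≠] x, ‖slope (phi E) x y - ff E x‖ ≤
      2 * ⨍ z in closedBall x |y - x|, ‖ff E z - ff E x‖ := by
    filter_upwards [self_mem_nhdsWithin] with y hy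
    have hyx : y ≠ x := by simpa using hy
    have hr : 0 < |y - x| := abs_pos.mpr (sub_ne_zero.mpr hyx)
    set r := |y - x| with hrdef
    have hnum : slope (phi E) x y - ff E x = (∫ t in x..y, (ff E t - ff E x)) / (y - x) := by
      rw [phi_slope hE x y hyx,
        intervalIntegral.integral_sub (fint hE x y) (intervalIntegrable_const),
        intervalIntegral.integral_const]
      rw [smul_eq_mul, sub_div, mul_comm, mul_div_assoc, div_self (sub_ne_zero.mpr hyx), mul_one]
    have hginte : IntegrableOn (fun z => ‖ff E z - ff E x‖) (closedBall x r) volume := by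
      refine Integrable.mono' (g := fun _ => (2:ℝ)) ?_ ?_ ?_
      · exact (integrableOn_const_iff).mpr (Or.inr (by rw [Real.volume_closedBall]; exact ENNReal.ofReal_lt_top))
      · exact (((fmeas hE).sub measurable_const).norm).aestronglyMeasurable
      · refine Eventually.of_forall (fun t => ?_)
        rw [norm_norm]
        calc ‖ff E t - ff E x‖ ≤ ‖ff E t‖ + ‖ff E x‖ := norm_sub_le _ _
          _ = 2 := by rw [fnorm, fnorm]; norm_num
    have hsub : Set.uIoc x y ⊆ closedBall x r := by
      intro z hz
      rw [mem_closedBall, Real.dist_eq]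
      rcases le_or_gt x y with hle | hlt
      · rw [uIoc_of_le hle] at hz
        rw [abs_sub_le_iff]
        constructor
        · calc z - x ≤ y - x := by linarith [hz.2]
            _ ≤ |y - x| := le_abs_self _
        · calc x - z ≤ 0 := by linarith [hz.1]
            _ ≤ |y - x| := hr.le
      · rw [uIoc_of_ge hlt.le] at hz
        rw [abs_sub_le_iff]
        constructor
        · calc z - x ≤ 0 := by linarith [hz.2]
            _ ≤ |y - x| := hr.le
        · calc x - z ≤ x - y := by linarith [hz.1]
            _ ≤ |y - x| := by rw [abs_sub_comm]; exact le_abs_self _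
    have h1 : ‖∫ t in x..y, (ff E t - ff E x)‖ ≤ ∫ z in closedBall x r, ‖ff E z - ff E x‖ := by
      refine intervalIntegral.norm_integral_le_integral_norm_uIoc.trans ?_
      refine setIntegral_mono_set hginte ?_ (HasSubset.Subset.eventuallyLE hsub)
      exact Eventually.of_forall (fun z => norm_nonneg _)
    have hvol : (volume (closedBall x r)).toReal = 2 * r := by
      rw [Real.volume_closedBall, ENNReal.toReal_ofReal (by linarith)]
    have havg2 : ∫ z in closedBall x r, ‖ff E z - ff E x‖ =
        (2 * r) * ⨍ z in closedBall x r, ‖ff E z - ff E x‖ := by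
      rw [setAverage_eq, measureReal_def, hvol]
      rw [smul_eq_mul, ← mul_assoc, mul_inv_cancel₀ (by linarith), one_mul]
    have havgnn : 0 ≤ ⨍ z in closedBall x r, ‖ff E z - ff E x‖ := by
      rw [setAverage_eq]
      exact smul_nonneg (by positivity) (integral_nonneg (fun z => norm_nonneg _))
    rw [hnum, norm_div]
    rw [Real.norm_eq_abs (y - x), ← hrdef]
    rw [div_le_iff₀ hr]
    calc ‖∫ t in x..y, (ff E t - ff E x)‖ ≤ (2 * r) * ⨍ z in closedBall x r, ‖ff E z - ff E x‖ :=
          h1.trans (le_of_eq havg2)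
      _ = 2 * (⨍ z in closedBall x r, ‖ff E z - ff E x‖) * r := by ring
  have h2 : Tendsto (fun y => 2 * ⨍ z in closedBall x |y - x|, ‖ff E z - ff E x‖)
      (𝓝[≠] x) (𝓝 0) := by
    have := havg.const_mul (2:ℝ)
    simpa using this
  have := squeeze_zero_norm' hbound h2
  exact tendsto_sub_nhds_zero_iff.mp this

end phi

theorem stmt_19 (N : Set ℝ) (hN : volume N = 0) :
    ∃ φ : ℝ → ℝ, LipschitzWith 1 φ ∧
      (∀ᵐ t ∂(volume : Measure ℝ), DifferentiableAt ℝ φ t ∧ |deriv φ t| = 1) ∧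
      ∀ t ∈ N, ¬ DifferentiableAt ℝ φ t := by
  classical
  obtain ⟨U, hUo, hUN, hUanti, hwin⟩ := seqLem N hN
  set E : Set ℝ := ⋃ m, U (2*m) \ U (2*m+1) with hEdef
  have hE : MeasurableSet E :=
    MeasurableSet.iUnion fun m => ((hUo _).measurableSet.diff (hUo _).measurableSet)
  have hUmono : ∀ {m n : ℕ}, m ≤ n → U n ⊆ U m :=
    fun {m n} h => antitone_nat_of_succ_le hUanti h
  refine ⟨phi E, phi_lip hE, ?_, ?_⟩
  · filter_upwards [phi_hasDerivAt_ae hE] with x hx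
    refine ⟨hx.differentiableAt, ?_⟩
    rw [hx.deriv, ← Real.norm_eq_abs, fnorm]
  · intro x hx hdiff
    have hL : Tendsto (slope (phi E) x) (𝓝[≠] x) (𝓝 (deriv (phi E) x)) :=
      hasDerivAt_iff_tendsto_slope.mp hdiff.hasDerivAt
    set L := deriv (phi E) x with hLdef
    choose hfun h0 h1 h2 h3 using fun n => hwin n x hx
    -- slope values
    have hne : ∀ n, x + hfun n ≠ x := fun n => by have := h0 n; intro hc; linarith [congrArg (· - x) hc] 
    have hval : ∀ n, slope (phi E) x (x + hfun n) =
        (2 * (volume (E ∩ Ioc x (x + hfun n))).toReal - hfun n) / hfun n := by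
      intro n
      rw [phi_slope hE _ _ (hne n), integral_eq hE x (hfun n) (h0 n).le, add_sub_cancel_left]
    have hfin : ∀ n, volume (E ∩ Ioc x (x + hfun n)) ≠ ∞ := fun n =>
      (lt_of_le_of_lt (measure_mono inter_subset_right) measure_Ioc_lt_top).ne
    have hεpos : ∀ n : ℕ, (0:ℝ) < (1/2)^(n+1) := fun n => by positivity
    -- even estimate
    have heven : ∀ m : ℕ, 1 - 2 * (1/2:ℝ)^(2*m+1) ≤ slope (phi E) x (x + hfun (2*m)) := by
      intro m
      set n := 2*m with hn
      set h := hfun n with hhd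
      set ε := ((1/2:ℝ))^(n+1) with hεd
      have hsub : Ioo x (x+h) \ E ⊆ U (n+1) ∩ Ioo (x-h) (x+h) := by
        rintro y ⟨hy1, hy2⟩
        have hyI : y ∈ Ioo (x-h) (x+h) := ⟨by linarith [hy1.1, h0 n], hy1.2⟩
        refine ⟨?_, hyI⟩
        by_contra hyU
        exact hy2 (mem_iUnion.mpr ⟨m, h2 n hyI, hyU⟩)
      have hv1 : volume (Ioo x (x+h) \ E) ≤ ENNReal.ofReal (ε * h) :=
        (measure_mono hsub).trans (h3 n)
      have hsub2 : Ioo x (x+h) ⊆ (E ∩ Ioc x (x+h)) ∪ (Ioo x (x+h) \ E) := by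
        intro y hy
        by_cases hyE : y ∈ E
        · exact Or.inl ⟨hyE, Ioo_subset_Ioc_self hy⟩
        · exact Or.inr ⟨hy, hyE⟩
      have hv2 : ENNReal.ofReal h ≤ volume (E ∩ Ioc x (x+h)) + ENNReal.ofReal (ε * h) := by
        calc ENNReal.ofReal h = volume (Ioo x (x+h)) := by
              rw [Real.volume_Ioo]; congr 1; ring
          _ ≤ volume ((E ∩ Ioc x (x+h)) ∪ (Ioo x (x+h) \ E)) := measure_mono hsub2
          _ ≤ volume (E ∩ Ioc x (x+h)) + volume (Ioo x (x+h) \ E) := measure_union_le _ _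
          _ ≤ _ := by gcongr
      have hAr : h - ε*h ≤ (volume (E ∩ Ioc x (x+h))).toReal := by
        have hfin2 : volume (E ∩ Ioc x (x+h)) + ENNReal.ofReal (ε * h) ≠ ∞ :=
          ENNReal.add_ne_top.mpr ⟨hfin n, ENNReal.ofReal_ne_top⟩
        have := (ENNReal.toReal_le_toReal ENNReal.ofReal_ne_top hfin2).mpr hv2
        rw [ENNReal.toReal_add (hfin n) ENNReal.ofReal_ne_top,
          ENNReal.toReal_ofReal (h0 n).le,
          ENNReal.toReal_ofReal (mul_nonneg (hεpos n).le (h0 n).le)] at this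
        linarith
      rw [hval n, le_div_iff₀ (h0 n)]
      have hh0 := h0 n
      nlinarith
    -- odd estimate
    have hodd : ∀ m : ℕ, slope (phi E) x (x + hfun (2*m+1)) ≤ 2 * (1/2:ℝ)^(2*m+1+1) - 1 := by
      intro m
      set n := 2*m+1 with hn
      set h := hfun n with hhd
      set ε := ((1/2:ℝ))^(n+1) with hεd
      have hsub : E ∩ Ioc x (x+h) ⊆ (U (n+1) ∩ Ioo (x-h) (x+h)) ∪ {x+h} := by
        rintro y ⟨hyE, hyI⟩
        by_cases hy2 : y = x + h
        · exact Or.inr (by simp [hy2])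
        · have hyO : y ∈ Ioo (x-h) (x+h) :=
            ⟨by linarith [hyI.1, h0 n], lt_of_le_of_ne hyI.2 hy2⟩
          refine Or.inl ⟨?_, hyO⟩
          by_contra hyU
          obtain ⟨m', hm'⟩ := mem_iUnion.mp hyE
          rcases le_or_gt (n+1) (2*m') with hc | hc
          · exact hyU (hUmono hc hm'.1)
          · exact hm'.2 (hUmono (by omega) (h2 n hyO))
      have hv1 : volume (E ∩ Ioc x (x+h)) ≤ ENNReal.ofReal (ε * h) := by
        calc volume (E ∩ Ioc x (x+h))
            ≤ volume (U (n+1) ∩ Ioo (x-h) (x+h)) + volume ({x+h} : Set ℝ) :=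
              (measure_mono hsub).trans (measure_union_le _ _)
          _ = volume (U (n+1) ∩ Ioo (x-h) (x+h)) := by rw [Real.volume_singleton, add_zero]
          _ ≤ _ := h3 n
      have hAr : (volume (E ∩ Ioc x (x+h))).toReal ≤ ε*h := by
        have := (ENNReal.toReal_le_toReal (hfin n) ENNReal.ofReal_ne_top).mpr hv1
        rwa [ENNReal.toReal_ofReal (mul_nonneg (hεpos n).le (h0 n).le)] at this
      rw [hval n, div_le_iff₀ (h0 n)]
      have hh0 := h0 n
      nlinarith
    -- limits
    have hfuntends : Tendsto (fun n => hfun n) atTop (𝓝 0) := by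
      refine squeeze_zero (fun n => (h0 n).le) (fun n => h1 n) ?_
      have h12 : Tendsto (fun n : ℕ => ((1/2:ℝ))^n) atTop (𝓝 0) :=
        tendsto_pow_atTop_nhds_zero_of_lt_one (by norm_num) (by norm_num)
      have hcomp : Tendsto (fun n : ℕ => n+1) atTop atTop :=
        tendsto_atTop_mono (fun n => by omega : ∀ n : ℕ, n ≤ n+1) tendsto_id
      exact h12.comp hcomp
    have hεtends : Tendsto (fun n : ℕ => ((1/2:ℝ))^(n+1)) atTop (𝓝 0) := by
      have h12 : Tendsto (fun n : ℕ => ((1/2:ℝ))^n) atTop (𝓝 0) :=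
        tendsto_pow_atTop_nhds_zero_of_lt_one (by norm_num) (by norm_num)
      exact h12.comp (tendsto_atTop_mono (fun n => by omega : ∀ n : ℕ, n ≤ n+1) tendsto_id)
    have hseq : ∀ (g : ℕ → ℕ), Tendsto g atTop atTop →
        Tendsto (fun m => slope (phi E) x (x + hfun (g m))) atTop (𝓝 L) := by
      intro g hg
      refine hL.comp ?_
      refine tendsto_nhdsWithin_iff.mpr ⟨?_, ?_⟩
      · have : Tendsto (fun m => hfun (g m)) atTop (𝓝 0) := hfuntends.comp hg
        simpa using tendsto_const_nhds.add this
      · exact Eventually.of_forall (fun m => hne (g m))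
    have hgEven : Tendsto (fun m : ℕ => 2*m) atTop atTop :=
      tendsto_atTop_mono (fun m => by omega : ∀ m : ℕ, m ≤ 2*m) tendsto_id
    have hgOdd : Tendsto (fun m : ℕ => 2*m+1) atTop atTop :=
      tendsto_atTop_mono (fun m => by omega : ∀ m : ℕ, m ≤ 2*m+1) tendsto_id
    have hL1 : 1 ≤ L := by
      have hlhs : Tendsto (fun m : ℕ => 1 - 2 * ((1/2:ℝ))^(2*m+1)) atTop (𝓝 1) := by
        have : Tendsto (fun m : ℕ => ((1/2:ℝ))^(2*m+1)) atTop (𝓝 0) :=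
          (tendsto_pow_atTop_nhds_zero_of_lt_one (by norm_num) (by norm_num)).comp
            (tendsto_atTop_mono (fun m => by omega : ∀ m : ℕ, m ≤ 2*m+1) tendsto_id)
        have := this.const_mul (2:ℝ)
        have := (tendsto_const_nhds (x := (1:ℝ)) (f := atTop (α := ℕ))).sub this
        simpa using this
      exact le_of_tendsto_of_tendsto' hlhs (hseq _ hgEven) heven
    have hL2 : L ≤ -1 := by
      have hrhs : Tendsto (fun m : ℕ => 2 * ((1/2:ℝ))^(2*m+1+1) - 1) atTop (𝓝 (-1)) := by
        have : Tendsto (fun m : ℕ => ((1/2:ℝ))^(2*m+1+1)) atTop (𝓝 0) :=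
          (tendsto_pow_atTop_nhds_zero_of_lt_one (by norm_num) (by norm_num)).comp
            (tendsto_atTop_mono (fun m => by omega : ∀ m : ℕ, m ≤ 2*m+1+1) tendsto_id)
        have := (this.const_mul (2:ℝ)).sub (tendsto_const_nhds (x := (1:ℝ)))
        simpa using this
      exact le_of_tendsto_of_tendsto' (hseq _ hgOdd) hrhs hodd
    linarith
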